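/- Let g be the Lie algebra A_{4,1}. A skew-symmetric linear map r : g* → g is a solution of the CYBE if and only if ε4(r(ε2)) = 0 and ε4(r(ε3)) = 0; equivalently, the skew-symmetric solutions of the CYBE on A_{4,1} are exactly the 2-vectors of the form r¹²·e1∧e2 + r¹³·e1∧e3 + r¹⁴·e1∧e4 + r²³·e2∧e3 with arbitrary real coefficients r¹², r¹³, r¹⁴, r²³. -/

import Mathlib

noncomputable section

open Module

variable {g : Type*} [LieRing g] [LieAlgebra ℝ g]

/-- The coadjoint operator: `(coad X α) Y = -α ⁅X, Y⁆`. -/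
def coad (X : g) : Module.Dual ℝ g →ₗ[ℝ] Module.Dual ℝ g :=
  -(LieAlgebra.ad ℝ g X).dualMap

/-- A linear map `r : g* → g` is skew-symmetric if `α (r β) = -β (r α)`. -/
def IsSkew (r : Module.Dual ℝ g →ₗ[ℝ] g) : Prop :=
  ∀ α β : Module.Dual ℝ g, α (r β) = -β (r α)

/-- The Sklyanin bracket on `g*` defined by `r`. -/
def sklyanin (r : Module.Dual ℝ g →ₗ[ℝ] g) (α β : Module.Dual ℝ g) : Module.Dual ℝ g :=
  coad (r α) β - coad (r β) α

/-- `r` is a solution of the classical Yang-Baxter equation. -/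
def IsCYBE (r : Module.Dual ℝ g →ₗ[ℝ] g) : Prop :=
  ∀ α β : Module.Dual ℝ g, r (sklyanin r α β) = ⁅r α, r β⁆

/-- `n : g → g` is a Nijenhuis operator. -/
def IsNijenhuis (n : g →ₗ[ℝ] g) : Prop :=
  ∀ X Y : g, ⁅n X, n Y⁆ - n ⁅n X, Y⁆ - n ⁅X, n Y⁆ + n (n ⁅X, Y⁆) = 0

/-- `(r, n)` is an r-n structure on `g`. -/
def IsRN (r : Module.Dual ℝ g →ₗ[ℝ] g) (n : g →ₗ[ℝ] g) : Prop :=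
  IsSkew r ∧ IsCYBE r ∧ IsNijenhuis n ∧
    (∀ α : Module.Dual ℝ g, n (r α) = r (n.dualMap α)) ∧
    ∀ α β : Module.Dual ℝ g,
      coad (r α) (n.dualMap β) - coad (r β) (n.dualMap α)
        - n.dualMap (coad (r α) β) + n.dualMap (coad (r β) α) = 0

/-- The Nijenhuis concomitant of two endomorphisms. -/
def nijConcomitant (n' n : g →ₗ[ℝ] g) (X Y : g) : g :=
  ⁅n' X, n Y⁆ + ⁅n X, n' Y⁆ - n' ⁅n X, Y⁆ - n' ⁅X, n Y⁆ - n ⁅n' X, Y⁆ - n ⁅X, n' Y⁆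
    + n' (n ⁅X, Y⁆) + n (n' ⁅X, Y⁆)

/-- The underlying space of the Lie algebra `A_{4,1}`: `ℝ⁴`. -/
def A41 : Type := Fin 4 → ℝ

instance : AddCommGroup A41 := inferInstanceAs (AddCommGroup (Fin 4 → ℝ))
instance : Module ℝ A41 := inferInstanceAs (Module ℝ (Fin 4 → ℝ))

namespace A41

@[simp] theorem add_apply (x y : A41) (i : Fin 4) : (x + y) i = x i + y i := rfl
@[simp] theorem smul_apply (c : ℝ) (x : A41) (i : Fin 4) : (c • x) i = c * x i := rfl
@[simp] theorem neg_apply (x : A41) (i : Fin 4) : (-x) i = -(x i) := rfl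
@[simp] theorem sub_apply (x y : A41) (i : Fin 4) : (x - y) i = x i - y i := rfl
@[simp] theorem zero_apply (i : Fin 4) : (0 : A41) i = 0 := rfl

/-- The bracket of `A_{4,1}`: `[e2, e4] = e1`, `[e3, e4] = e2`. -/
def br (x y : A41) : A41 := fun i =>
  if i = 0 then x 1 * y 3 - x 3 * y 1
  else if i = 1 then x 2 * y 3 - x 3 * y 2
  else 0

@[simp] theorem br_apply (x y : A41) (i : Fin 4) :
    br x y i = if i = 0 then x 1 * y 3 - x 3 * y 1
      else if i = 1 then x 2 * y 3 - x 3 * y 2 else 0 := rfl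

instance : LieRing A41 where
  bracket := br
  add_lie x y z := by funext i; simp [br]; split_ifs <;> ring
  lie_add x y z := by funext i; simp [br]; split_ifs <;> ring
  lie_self x := by funext i; simp [br]; split_ifs <;> ring
  leibniz_lie x y z := by funext i; simp [br]; split_ifs <;> ring

instance : LieAlgebra ℝ A41 where
  lie_smul c x y := by funext i; show br x (c • y) i = (c • br x y) i; simp [br]; split_ifs <;> ring

/-- Basis vectors `e1, e2, e3, e4` (zero-indexed). -/
def e (i : Fin 4) : A41 := fun j => if j = i then 1 else 0

/-- Dual basis `ε1, ε2, ε3, ε4` (zero-indexed). -/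
def eps (i : Fin 4) : Module.Dual ℝ A41 where
  toFun x := x i
  map_add' _ _ := rfl
  map_smul' _ _ := rfl

end A41

open A41

section Aux

@[simp] lemma eps_apply' (i : Fin 4) (x : A41) : eps i x = x i := rfl

lemma lie_def' (x y : A41) : ⁅x, y⁆ = br x y := rfl

lemma x_repr' (x : A41) : x = x 0 • e 0 + x 1 • e 1 + x 2 • e 2 + x 3 • e 3 := by
  funext j; fin_cases j <;> simp [e]

lemma dual_repr' (γ : Module.Dual ℝ A41) (x : A41) :
    γ x = x 0 * γ (e 0) + x 1 * γ (e 1) + x 2 * γ (e 2) + x 3 * γ (e 3) := by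
  conv_lhs => rw [x_repr' x]
  simp [mul_comm]

lemma eps_repr' (γ : Module.Dual ℝ A41) :
    γ = γ (e 0) • eps 0 + γ (e 1) • eps 1 + γ (e 2) • eps 2 + γ (e 3) • eps 3 := by
  apply LinearMap.ext; intro x
  simp only [LinearMap.add_apply, LinearMap.smul_apply, eps_apply', smul_eq_mul]
  rw [dual_repr' γ x]; ring

lemma r_apply' (r : Module.Dual ℝ A41 →ₗ[ℝ] A41) (γ : Module.Dual ℝ A41) :
    r γ = γ (e 0) • r (eps 0) + γ (e 1) • r (eps 1) + γ (e 2) • r (eps 2)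
        + γ (e 3) • r (eps 3) := by
  conv_lhs => rw [eps_repr' γ]
  simp

lemma coad_apply' (X : A41) (γ : Module.Dual ℝ A41) (y : A41) :
    coad X γ y = -γ ⁅X, y⁆ := rfl

lemma sklyanin_apply' (r : Module.Dual ℝ A41 →ₗ[ℝ] A41) (α β : Module.Dual ℝ A41)
    (y : A41) : sklyanin r α β y = α ⁅r β, y⁆ - β ⁅r α, y⁆ := by
  simp only [sklyanin, LinearMap.sub_apply, coad_apply']; ring

lemma dual_br' (γ : Module.Dual ℝ A41) (x y : A41) :
    γ ⁅x, y⁆ = (x 1 * y 3 - x 3 * y 1) * γ (e 0) + (x 2 * y 3 - x 3 * y 2) * γ (e 1) := by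
  rw [dual_repr' γ ⁅x, y⁆]
  simp [lie_def', br]

end Aux

section Key

variable (r : Module.Dual ℝ A41 →ₗ[ℝ] A41)

lemma skew_comp (hskew : IsSkew r) (i j : Fin 4) : r (eps j) i = - r (eps i) j := by
  have := hskew (eps i) (eps j); simpa using this

lemma a41_cybe_of (hskew : IsSkew r) (h1 : r (eps 3) 1 = 0) (h2 : r (eps 3) 2 = 0) :
    IsCYBE r := by
  have hs := skew_comp r hskew
  have hd : ∀ i, r (eps i) i = 0 := fun i => by have := hs i i; linarith
  intro α β
  funext i
  rw [r_apply' r (sklyanin r α β)]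
  simp only [add_apply, smul_apply, sklyanin_apply', dual_br']
  rw [r_apply' r α, r_apply' r β, lie_def']
  simp only [add_apply, smul_apply, br_apply, e]
  fin_cases i <;>
    simp only [Fin.isValue, Fin.zero_eta, Fin.mk_one, Fin.reduceFinMk, show ((0:Fin 4) ≠ 1) by decide, show ((0:Fin 4) ≠ 2) by decide,
      show ((0:Fin 4) ≠ 3) by decide, show ((1:Fin 4) ≠ 0) by decide,
      show ((1:Fin 4) ≠ 2) by decide, show ((1:Fin 4) ≠ 3) by decide,
      show ((2:Fin 4) ≠ 0) by decide, show ((2:Fin 4) ≠ 1) by decide,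
      show ((2:Fin 4) ≠ 3) by decide, show ((3:Fin 4) ≠ 0) by decide,
      show ((3:Fin 4) ≠ 1) by decide, show ((3:Fin 4) ≠ 2) by decide,
      if_true, if_false, ite_true, ite_false, reduceIte] <;>
    simp only [hs 1 0, hs 2 0, hs 3 0, hs 2 1, hs 3 1, hs 3 2, hd, h1, h2] <;>
    ring

end Key

section Fwd

variable (r : Module.Dual ℝ A41 →ₗ[ℝ] A41)

lemma a41_m23_of_cybe (hskew : IsSkew r) (hc : IsCYBE r) : r (eps 3) 2 = 0 := by
  have hs := skew_comp r hskew
  have hd : ∀ i, r (eps i) i = 0 := fun i => by have := hs i i; linarith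
  have h := congrFun (hc (eps 1) (eps 3)) 2
  rw [r_apply' r (sklyanin r (eps 1) (eps 3))] at h
  simp only [add_apply, smul_apply, sklyanin_apply', dual_br', lie_def', br_apply,
    eps_apply', e, Fin.isValue, show ((2:Fin 4) ≠ 0) by decide,
    show ((2:Fin 4) ≠ 1) by decide, show ((0:Fin 4) ≠ 1) by decide,
    show ((0:Fin 4) ≠ 2) by decide, show ((0:Fin 4) ≠ 3) by decide,
    show ((1:Fin 4) ≠ 0) by decide, show ((1:Fin 4) ≠ 2) by decide,
    show ((1:Fin 4) ≠ 3) by decide, show ((3:Fin 4) ≠ 0) by decide,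
    show ((3:Fin 4) ≠ 1) by decide, show ((3:Fin 4) ≠ 2) by decide,
    if_true, if_false, ite_true, ite_false, reduceIte] at h
  simp only [hs 1 0, hs 2 0, hs 3 0, hs 2 1, hs 3 1, hs 3 2, hd] at h
  have h23 : r (eps 3) 2 * r (eps 3) 2 = 0 := by linear_combination h
  exact mul_self_eq_zero.mp h23

lemma a41_m13_of_cybe (hskew : IsSkew r) (hc : IsCYBE r) : r (eps 3) 1 = 0 := by
  have hs := skew_comp r hskew
  have hd : ∀ i, r (eps i) i = 0 := fun i => by have := hs i i; linarith
  have h23 := a41_m23_of_cybe r hskew hc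
  have h := congrFun (hc (eps 0) (eps 1)) 3
  rw [r_apply' r (sklyanin r (eps 0) (eps 1))] at h
  simp only [add_apply, smul_apply, sklyanin_apply', dual_br', lie_def', br_apply,
    eps_apply', e, Fin.isValue, show ((2:Fin 4) ≠ 0) by decide,
    show ((2:Fin 4) ≠ 1) by decide, show ((0:Fin 4) ≠ 1) by decide,
    show ((0:Fin 4) ≠ 2) by decide, show ((0:Fin 4) ≠ 3) by decide,
    show ((1:Fin 4) ≠ 0) by decide, show ((1:Fin 4) ≠ 2) by decide,
    show ((1:Fin 4) ≠ 3) by decide, show ((3:Fin 4) ≠ 0) by decide,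
    show ((3:Fin 4) ≠ 1) by decide, show ((3:Fin 4) ≠ 2) by decide,
    show ((2:Fin 4) ≠ 3) by decide,
    if_true, if_false, ite_true, ite_false, reduceIte] at h
  simp only [hs 1 0, hs 2 0, hs 3 0, hs 2 1, hs 3 1, hs 3 2, hd, h23] at h
  have h13 : r (eps 3) 1 * r (eps 3) 1 = 0 := by linear_combination -h
  exact mul_self_eq_zero.mp h13

end Fwd

open A41 in
/-- On the Lie algebra `A_{4,1}`, a skew-symmetric linear map `r : g* → g`
is a solution of the CYBE iff `ε4(r(ε2)) = 0` and `ε4(r(ε3)) = 0`; equivalently, iff `r`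
is of the form `r¹²·e1∧e2 + r¹³·e1∧e3 + r¹⁴·e1∧e4 + r²³·e2∧e3` for some reals. -/
theorem a41_isCYBE_iff
    (r : Module.Dual ℝ A41 →ₗ[ℝ] A41) (hskew : IsSkew r) :
    (IsCYBE r ↔ (eps 3 (r (eps 1)) = 0 ∧ eps 3 (r (eps 2)) = 0)) ∧
    (IsCYBE r ↔ ∃ r12 r13 r14 r23 : ℝ, ∀ α : Module.Dual ℝ A41,
      r α = r12 • (α (e 0) • e 1 - α (e 1) • e 0)
          + r13 • (α (e 0) • e 2 - α (e 2) • e 0)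
          + r14 • (α (e 0) • e 3 - α (e 3) • e 0)
          + r23 • (α (e 1) • e 2 - α (e 2) • e 1)) := by
  have hs := skew_comp r hskew
  have hd : ∀ i, r (eps i) i = 0 := fun i => by have := hs i i; linarith
  have iff1 : IsCYBE r ↔ (eps 3 (r (eps 1)) = 0 ∧ eps 3 (r (eps 2)) = 0) := by
    constructor
    · intro hc
      have h13 := a41_m13_of_cybe r hskew hc
      have h23 := a41_m23_of_cybe r hskew hc
      constructor
      · show r (eps 1) 3 = 0
        have := hs 3 1; linarith
      · show r (eps 2) 3 = 0
        have := hs 3 2; linarith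
    · rintro ⟨h1, h2⟩
      have h1' : r (eps 1) 3 = 0 := h1
      have h2' : r (eps 2) 3 = 0 := h2
      refine a41_cybe_of r hskew ?_ ?_
      · have := hs 3 1; linarith
      · have := hs 3 2; linarith
  refine ⟨iff1, iff1.trans ?_⟩
  constructor
  · rintro ⟨h1, h2⟩
    have h1' : r (eps 1) 3 = 0 := h1
    have h2' : r (eps 2) 3 = 0 := h2
    have h31 : r (eps 3) 1 = 0 := by have := hs 3 1; linarith
    have h32 : r (eps 3) 2 = 0 := by have := hs 3 2; linarith
    refine ⟨r (eps 0) 1, r (eps 0) 2, r (eps 0) 3, r (eps 1) 2, fun α => ?_⟩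
    funext i
    rw [r_apply' r α]
    simp only [add_apply, smul_apply, sub_apply, e, Fin.isValue]
    fin_cases i <;>
      simp only [Fin.isValue, Fin.zero_eta, Fin.mk_one, Fin.reduceFinMk,
        show ((0:Fin 4) ≠ 1) by decide, show ((0:Fin 4) ≠ 2) by decide,
        show ((0:Fin 4) ≠ 3) by decide, show ((1:Fin 4) ≠ 0) by decide,
        show ((1:Fin 4) ≠ 2) by decide, show ((1:Fin 4) ≠ 3) by decide,
        show ((2:Fin 4) ≠ 0) by decide, show ((2:Fin 4) ≠ 1) by decide,
        show ((2:Fin 4) ≠ 3) by decide, show ((3:Fin 4) ≠ 0) by decide,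
        show ((3:Fin 4) ≠ 1) by decide, show ((3:Fin 4) ≠ 2) by decide,
        if_true, if_false, ite_true, ite_false, reduceIte] <;>
      simp only [hs 1 0, hs 2 0, hs 3 0, hs 2 1, hs 3 1, hs 3 2, hd, h1', h2', h31, h32] <;>
      ring
  · rintro ⟨r12, r13, r14, r23, hf⟩
    constructor
    · show r (eps 1) 3 = 0
      rw [hf (eps 1)]
      simp [e]
    · show r (eps 2) 3 = 0
      rw [hf (eps 2)]
      simp [e]
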